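/- Every compact Hausdorff topological unosemigroup (S,λ,ρ) is ditopological. -/

import Mathlib

open Topology

/-- Dicontinuity of a left unit operation `l` at `x`:
for every neighborhood `O` of `x` there are a neighborhood `U` of `x` and a
neighborhood `W` of `l x` in the subspace `l(S)` such that
`(W ⟍ U) ∩ l⁻¹(W) ⊆ O`, where `W ⟍ U = {z | ∃ w ∈ W, w * z ∈ U}`. -/
def LeftDicontAt {S : Type*} [TopologicalSpace S] (mul : S → S → S) (l : S → S) (x : S) : Prop :=
  ∀ O ∈ 𝓝 x, ∃ U ∈ 𝓝 x, ∃ W ∈ 𝓝[Set.range l] (l x),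
    W ⊆ Set.range l ∧ {z | l z ∈ W ∧ ∃ w ∈ W, mul w z ∈ U} ⊆ O

/-- Dicontinuity of a right unit operation `r` at `x`. -/
def RightDicontAt {S : Type*} [TopologicalSpace S] (mul : S → S → S) (r : S → S) (x : S) : Prop :=
  ∀ O ∈ 𝓝 x, ∃ U ∈ 𝓝 x, ∃ W ∈ 𝓝[Set.range r] (r x),
    W ⊆ Set.range r ∧ {z | r z ∈ W ∧ ∃ w ∈ W, mul z w ∈ U} ⊆ O

open Uniformity in
/-- Every compact Hausdorff topological unosemigroup is ditopological. -/
theorem compact_hausdorff_unosemigroup_ditopological {S : Type*} [TopologicalSpace S]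
    [CompactSpace S] [T2Space S] [Mul S]
    (hassoc : ∀ a b c : S, a * b * c = a * (b * c))
    (hmul : Continuous fun p : S × S => p.1 * p.2)
    (l r : S → S) (hl : Continuous l) (hr : Continuous r)
    (hlunit : ∀ x : S, l x * x = x)
    (hrunit : ∀ x : S, x * r x = x) :
    ∀ x : S, LeftDicontAt (· * ·) l x ∧ RightDicontAt (· * ·) r x := by
  letI : UniformSpace S := uniformSpaceOfCompactR1
  have hUC : UniformContinuous fun p : S × S => p.1 * p.2 :=
    CompactSpace.uniformContinuous_of_continuous hmul
  -- ε-δ form of uniform continuity of multiplication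
  have key : ∀ V ∈ 𝓤 S, ∃ D ∈ 𝓤 S, ∀ a a' b b' : S,
      (a, a') ∈ D → (b, b') ∈ D → (a * b, a' * b') ∈ V := by
    intro V hV
    have h1 := hUC hV
    rw [uniformity_prod_eq_prod] at h1
    obtain ⟨D1, hD1, D2, hD2, h⟩ := Filter.mem_prod_iff.1 (Filter.mem_map.1 h1)
    refine ⟨D1 ∩ D2, Filter.inter_mem hD1 hD2, fun a a' b b' ha hb => ?_⟩
    exact h (Set.mk_mem_prod ha.1 hb.2)
  intro x
  constructor
  · -- left
    intro O hO
    obtain ⟨W₀, hW₀, hW₀O⟩ := (UniformSpace.mem_nhds_iff).1 hO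
    obtain ⟨V, hV, hVsymm, hVV⟩ := comp_symm_mem_uniformity_sets hW₀
    obtain ⟨D₀, hD₀, hkey⟩ := key V hV
    obtain ⟨D, hD, hDsymm, hDD⟩ := comp_symm_mem_uniformity_sets hD₀
    refine ⟨UniformSpace.ball x V, UniformSpace.ball_mem_nhds x hV,
      UniformSpace.ball (l x) D ∩ Set.range l,
      Filter.inter_mem (nhdsWithin_le_nhds (UniformSpace.ball_mem_nhds _ hD))
        self_mem_nhdsWithin,
      Set.inter_subset_right, ?_⟩
    rintro z ⟨hz, w, hw, hwz⟩
    have h1 : (l z, w) ∈ D₀ := hDD ⟨l x, hDsymm.symm _ _ hz.1, hw.1⟩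
    have h2 : (l z * z, w * z) ∈ V := hkey _ _ _ _ h1 (refl_mem_uniformity hD₀)
    rw [hlunit z] at h2
    exact hW₀O (hVV ⟨w * z, hwz, hVsymm.symm _ _ h2⟩)
  · -- right
    intro O hO
    obtain ⟨W₀, hW₀, hW₀O⟩ := (UniformSpace.mem_nhds_iff).1 hO
    obtain ⟨V, hV, hVsymm, hVV⟩ := comp_symm_mem_uniformity_sets hW₀
    obtain ⟨D₀, hD₀, hkey⟩ := key V hV
    obtain ⟨D, hD, hDsymm, hDD⟩ := comp_symm_mem_uniformity_sets hD₀
    refine ⟨UniformSpace.ball x V, UniformSpace.ball_mem_nhds x hV,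
      UniformSpace.ball (r x) D ∩ Set.range r,
      Filter.inter_mem (nhdsWithin_le_nhds (UniformSpace.ball_mem_nhds _ hD))
        self_mem_nhdsWithin,
      Set.inter_subset_right, ?_⟩
    rintro z ⟨hz, w, hw, hwz⟩
    have h1 : (r z, w) ∈ D₀ := hDD ⟨r x, hDsymm.symm _ _ hz.1, hw.1⟩
    have h2 : (z * r z, z * w) ∈ V := hkey _ _ _ _ (refl_mem_uniformity hD₀) h1
    rw [hrunit z] at h2
    exact hW₀O (hVV ⟨z * w, hwz, hVsymm.symm _ _ h2⟩)
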